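/- If m > 1 and z = x + iy is a complex number satisfying sin(mπz) = m·sin(πz), then |y| ≤ log(2m+1)/(π(m-1)). -/

import Mathlib

open Complex Real

lemma sin_abs_lower (w : ℂ) :
    Real.exp |w.im| - Real.exp (-|w.im|) ≤ 2 * ‖Complex.sin w‖ := by
  rw [Complex.sin]
  have h1 : ‖Complex.exp (-w * Complex.I)‖ = Real.exp w.im := by
    rw [Complex.norm_exp]; simp
  have h2 : ‖Complex.exp (w * Complex.I)‖ = Real.exp (-w.im) := by
    rw [Complex.norm_exp]; simp
  have htri : |Real.exp w.im - Real.exp (-w.im)| ≤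
      ‖Complex.exp (-w * Complex.I) - Complex.exp (w * Complex.I)‖ := by
    rw [← h1, ← h2]
    exact abs_norm_sub_norm_le _ _
  have habs : ‖(Complex.exp (-w * Complex.I) - Complex.exp (w * Complex.I)) * Complex.I / 2‖
      = ‖Complex.exp (-w * Complex.I) - Complex.exp (w * Complex.I)‖ / 2 := by
    simp [map_div₀, map_mul]
  rw [habs]
  have hsym : Real.exp |w.im| - Real.exp (-|w.im|) ≤ |Real.exp w.im - Real.exp (-w.im)| := by
    rcases abs_cases w.im with ⟨h, _⟩ | ⟨h, _⟩
    · rw [h]; exact le_abs_self _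
    · rw [h]; rw [neg_neg]
      rw [abs_sub_comm]
      exact le_abs_self _
  linarith

lemma sin_abs_upper (w : ℂ) : ‖Complex.sin w‖ ≤ Real.exp |w.im| := by
  rw [Complex.sin]
  have h1 : ‖Complex.exp (-w * Complex.I)‖ = Real.exp w.im := by
    rw [Complex.norm_exp]; simp
  have h2 : ‖Complex.exp (w * Complex.I)‖ = Real.exp (-w.im) := by
    rw [Complex.norm_exp]; simp
  have habs : ‖(Complex.exp (-w * Complex.I) - Complex.exp (w * Complex.I)) * Complex.I / 2‖
      = ‖Complex.exp (-w * Complex.I) - Complex.exp (w * Complex.I)‖ / 2 := by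
    simp [map_div₀, map_mul]
  rw [habs]
  have := norm_sub_le (Complex.exp (-w * Complex.I)) (Complex.exp (w * Complex.I))
  rw [h1, h2] at this
  have e1 : Real.exp w.im ≤ Real.exp |w.im| := Real.exp_le_exp.2 (le_abs_self _)
  have e2 : Real.exp (-w.im) ≤ Real.exp |w.im| := Real.exp_le_exp.2 (neg_le_abs _)
  linarith

theorem imag_bound_odd (m : ℝ) (hm : 1 < m) (z : ℂ)
    (hz : Complex.sin (m * Real.pi * z) = m * Complex.sin (Real.pi * z)) :
    |z.im| ≤ Real.log (2 * m + 1) / (Real.pi * (m - 1)) := by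
  have hπ := Real.pi_pos
  set t := Real.pi * |z.im| with ht
  have ht0 : 0 ≤ t := by positivity
  have him1 : ((m : ℂ) * (Real.pi : ℂ) * z).im = m * Real.pi * z.im := by
    simp [Complex.mul_im]
  have him2 : ((Real.pi : ℂ) * z).im = Real.pi * z.im := by simp
  have ha1 : |((m : ℂ) * (Real.pi : ℂ) * z).im| = m * t := by
    rw [him1, abs_mul, abs_mul, abs_of_pos (by linarith : (0:ℝ) < m), abs_of_pos hπ]
    ring
  have ha2 : |((Real.pi : ℂ) * z).im| = t := by
    rw [him2, abs_mul, abs_of_pos hπ]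
  have hlow := sin_abs_lower ((m : ℂ) * (Real.pi : ℂ) * z)
  have hup := sin_abs_upper ((Real.pi : ℂ) * z)
  rw [ha1] at hlow
  rw [ha2] at hup
  have heq : ‖Complex.sin ((m : ℂ) * (Real.pi : ℂ) * z)‖
      = m * ‖Complex.sin ((Real.pi : ℂ) * z)‖ := by
    rw [hz, norm_mul, Complex.norm_real, Real.norm_eq_abs, abs_of_pos (by linarith : (0:ℝ) < m)]
  rw [heq] at hlow
  have key : Real.exp (m * t) ≤ (2 * m + 1) * Real.exp t := by
    have h3 : Real.exp (-(m * t)) ≤ Real.exp t :=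
      Real.exp_le_exp.2 (by nlinarith)
    have h4 : m * ‖Complex.sin ((Real.pi : ℂ) * z)‖ ≤ m * Real.exp t := by
      nlinarith
    linarith
  have key2 : Real.exp ((m - 1) * t) ≤ 2 * m + 1 := by
    have : Real.exp ((m - 1) * t) = Real.exp (m * t) / Real.exp t := by
      rw [← Real.exp_sub]; ring_nf
    rw [this, div_le_iff₀ (Real.exp_pos t)]
    exact key
  have key3 : (m - 1) * t ≤ Real.log (2 * m + 1) :=
    (Real.le_log_iff_exp_le (by linarith)).2 key2
  rw [le_div_iff₀ (mul_pos hπ (by linarith))]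
  calc |z.im| * (Real.pi * (m - 1)) = (m - 1) * t := by rw [ht]; ring
    _ ≤ Real.log (2 * m + 1) := key3
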